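/- Let 2<r<k and A₀,B₀>0, and define Θ(t)=t^k+A₀·t²−B₀·t^r for t≥0. Then inf_{t≥0} Θ(t) < 0 if and only if A₀^{k−r}·B₀^{2−k} < d₀(r) := (k−r)^{k−r}·(r−2)^{r−2}/(k−2)^{k−2}. -/

import Mathlib

open Real Set

theorem stmt4 (r k A₀ B₀ : ℝ) (hr : 2 < r) (hk : r < k) (hA : 0 < A₀) (hB : 0 < B₀) :
    sInf ((fun t : ℝ => t ^ k + A₀ * t ^ (2:ℝ) - B₀ * t ^ r) '' Set.Ici 0) < 0 ↔
      A₀ ^ (k - r) * B₀ ^ (2 - k) <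
        (k - r) ^ (k - r) * (r - 2) ^ (r - 2) / (k - 2) ^ (k - 2) := by
  have ha : (0:ℝ) < k - r := by linarith
  have hb : (0:ℝ) < r - 2 := by linarith
  have hs : (0:ℝ) < k - 2 := by linarith
  have hk0 : 0 < k := by linarith
  have hr0 : 0 < r := by linarith
  set a := k - r with ha'
  set b := r - 2 with hb'
  set Θ : ℝ → ℝ := fun t => t ^ k + A₀ * t ^ (2:ℝ) - B₀ * t ^ r with hΘ
  set c : ℝ := A₀ * b / a with hc'
  have hc : 0 < c := by positivity
  set t₀ : ℝ := c ^ ((1:ℝ) / (k - 2)) with ht₀'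
  have ht₀ : 0 < t₀ := by positivity
  set m : ℝ := t₀ ^ a * ((k - 2) / b) with hm
  have hm_pos : 0 < m := by positivity
  -- t₀ ^ a = c ^ (a/(k-2))
  have hta : t₀ ^ a = c ^ (a / (k - 2)) := by
    rw [ht₀', ← Real.rpow_mul hc.le]
    congr 1
    field_simp
  -- key pointwise identity: A₀ * t₀ ^ (-b) = t₀ ^ a * (a / b)
  have hkey0 : A₀ * t₀ ^ (-b) = t₀ ^ a * (a / b) := by
    have h1 : t₀ ^ (-b) = c ^ (a / (k - 2)) / c := by
      have e : (1:ℝ) / (k - 2) * -b = a / (k - 2) - 1 := by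
        rw [ha', hb']; field_simp; ring
      rw [ht₀', ← Real.rpow_mul hc.le, e, Real.rpow_sub hc, Real.rpow_one]
    rw [h1, hta, hc']
    field_simp
  -- Θ 0 = 0
  have hΘ0 : Θ 0 = 0 := by
    simp [hΘ, Real.zero_rpow (ne_of_gt hk0), Real.zero_rpow (ne_of_gt hr0),
      Real.zero_rpow (two_ne_zero)]
  -- factorization for t > 0
  have hfact : ∀ t : ℝ, 0 < t → Θ t = t ^ r * (t ^ a + A₀ * t ^ (-b) - B₀) := by
    intro t ht
    have h1 : t ^ r * t ^ a = t ^ k := by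
      rw [← Real.rpow_add ht]; congr 1; rw [ha']; ring
    have h2 : t ^ r * t ^ (-b) = t ^ (2:ℝ) := by
      rw [← Real.rpow_add ht]; congr 1; rw [hb']; ring
    simp only [hΘ]
    rw [mul_sub, mul_add, h1, ← mul_assoc, mul_comm (t ^ r) A₀, mul_assoc, h2]
    ring
  -- AM-GM core inequality: for u > 0, k - 2 ≤ b * u ^ a + a * u ^ (-b)
  have hcore : ∀ u : ℝ, 0 < u → k - 2 ≤ b * u ^ a + a * u ^ (-b) := by
    intro u hu
    have h := Real.geom_mean_le_arith_mean2_weighted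
      (w₁ := b / (k - 2)) (w₂ := a / (k - 2)) (p₁ := u ^ a) (p₂ := u ^ (-b))
      (by positivity) (by positivity) (by positivity) (by positivity)
      (by field_simp; ring)
    have hL : (u ^ a) ^ (b / (k - 2)) * (u ^ (-b)) ^ (a / (k - 2)) = 1 := by
      rw [← Real.rpow_mul hu.le, ← Real.rpow_mul hu.le, ← Real.rpow_add hu]
      rw [show a * (b / (k - 2)) + -b * (a / (k - 2)) = 0 by ring, Real.rpow_zero]
    rw [hL] at h
    have := mul_le_mul_of_nonneg_left h hs.le
    calc k - 2 = (k - 2) * 1 := by ring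
      _ ≤ (k - 2) * (b / (k - 2) * u ^ a + a / (k - 2) * u ^ (-b)) := this
      _ = b * u ^ a + a * u ^ (-b) := by field_simp
  -- AM-GM: m ≤ t^a + A₀ t^(-b) for t > 0
  have hAM : ∀ t : ℝ, 0 < t → m ≤ t ^ a + A₀ * t ^ (-b) := by
    intro t ht
    set u : ℝ := t / t₀ with hu'
    have hu : 0 < u := by positivity
    have htu : t = t₀ * u := by rw [hu']; field_simp
    have h1 : t ^ a = t₀ ^ a * u ^ a := by
      rw [htu, Real.mul_rpow ht₀.le hu.le]
    have h2 : t ^ (-b) = t₀ ^ (-b) * u ^ (-b) := by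
      rw [htu, Real.mul_rpow ht₀.le hu.le]
    have h3 : A₀ * t ^ (-b) = t₀ ^ a * (a / b) * u ^ (-b) := by
      rw [h2, ← mul_assoc, hkey0]
    have h4 := hcore u hu
    have h5 : 0 < t₀ ^ a / b := by positivity
    have := mul_le_mul_of_nonneg_left h4 h5.le
    rw [h1, h3, hm]
    have hbne : b ≠ 0 := ne_of_gt hb
    calc t₀ ^ a * ((k - 2) / b) = t₀ ^ a / b * (k - 2) := by ring
      _ ≤ t₀ ^ a / b * (b * u ^ a + a * u ^ (-b)) := this
      _ = t₀ ^ a * u ^ a + t₀ ^ a * (a / b) * u ^ (-b) := by field_simp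
  -- attainment: g t₀ = m
  have hatt : t₀ ^ a + A₀ * t₀ ^ (-b) = m := by
    rw [hkey0, hm]
    have hab : (k - 2) = a + b := by rw [ha', hb']; ring
    have hbne : b ≠ 0 := ne_of_gt hb
    rw [hab]
    field_simp
    ring
  -- Step: ∃ t > 0, g t < B₀ ↔ m < B₀
  have hstep1 : (∃ t : ℝ, 0 < t ∧ t ^ a + A₀ * t ^ (-b) < B₀) ↔ m < B₀ := by
    constructor
    · rintro ⟨t, ht, hlt⟩
      exact lt_of_le_of_lt (hAM t ht) hlt
    · intro hlt
      exact ⟨t₀, ht₀, by rw [hatt]; exact hlt⟩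
  -- Step: sInf < 0 ↔ ∃ t ≥ 0, Θ t < 0
  have hne : (Θ '' Set.Ici 0).Nonempty := ⟨Θ 0, ⟨0, Set.self_mem_Ici, rfl⟩⟩
  have hbdd : BddBelow (Θ '' Set.Ici 0) := by
    set T : ℝ := max 1 (B₀ ^ ((1:ℝ)/a)) with hT'
    have hT1 : (1:ℝ) ≤ T := le_max_left _ _
    have hT0 : 0 < T := lt_of_lt_of_le one_pos hT1
    refine ⟨-(B₀ * T ^ r), ?_⟩
    rintro x ⟨t, ht, rfl⟩
    simp only [Set.mem_Ici] at ht
    have htk : 0 ≤ t ^ k := Real.rpow_nonneg ht _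
    have ht2 : 0 ≤ A₀ * t ^ (2:ℝ) := by positivity
    rcases le_or_gt t T with hle | hgt
    · have h1 : t ^ r ≤ T ^ r := Real.rpow_le_rpow ht hle hr0.le
      have h2 : B₀ * t ^ r ≤ B₀ * T ^ r := mul_le_mul_of_nonneg_left h1 hB.le
      simp only [hΘ]
      linarith
    · have ht1 : (1:ℝ) < t := lt_of_le_of_lt hT1 hgt
      have htpos : 0 < t := by linarith
      have hBa : B₀ ^ ((1:ℝ)/a) ≤ t := le_of_lt (lt_of_le_of_lt (le_max_right _ _) hgt)
      have h1 : B₀ ≤ t ^ a := by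
        have := Real.rpow_le_rpow (by positivity) hBa ha.le
        rwa [← Real.rpow_mul hB.le, one_div, inv_mul_cancel₀ (ne_of_gt ha),
          Real.rpow_one] at this
      have h2 : B₀ * t ^ r ≤ t ^ a * t ^ r := by
        have : 0 < t ^ r := Real.rpow_pos_of_pos htpos r
        nlinarith
      have h3 : t ^ a * t ^ r = t ^ k := by
        rw [← Real.rpow_add htpos]; congr 1; rw [ha']; ring
      have h4 : 0 < B₀ * T ^ r := by positivity
      rw [h3] at h2
      simp only [hΘ]
      linarith
  have hstep2 : sInf (Θ '' Set.Ici 0) < 0 ↔ ∃ t : ℝ, 0 ≤ t ∧ Θ t < 0 := by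
    constructor
    · intro h
      by_contra hcon
      push_neg at hcon
      have : 0 ≤ sInf (Θ '' Set.Ici 0) := by
        apply Real.sInf_nonneg
        rintro x ⟨t, ht, rfl⟩
        exact hcon t ht
      linarith
    · rintro ⟨t, ht, hlt⟩
      exact lt_of_le_of_lt (csInf_le hbdd ⟨t, ht, rfl⟩) hlt
  -- Step: ∃ t ≥ 0, Θ t < 0 ↔ ∃ t > 0, g t < B₀
  have hstep3 : (∃ t : ℝ, 0 ≤ t ∧ Θ t < 0) ↔ (∃ t : ℝ, 0 < t ∧ t ^ a + A₀ * t ^ (-b) < B₀) := by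
    constructor
    · rintro ⟨t, ht, hlt⟩
      rcases eq_or_lt_of_le ht with h0 | h0
      · rw [← h0, hΘ0] at hlt; linarith
      · refine ⟨t, h0, ?_⟩
        rw [hfact t h0] at hlt
        have htr : 0 < t ^ r := Real.rpow_pos_of_pos h0 r
        nlinarith
    · rintro ⟨t, ht, hlt⟩
      refine ⟨t, ht.le, ?_⟩
      rw [hfact t ht]
      have htr : 0 < t ^ r := Real.rpow_pos_of_pos ht r
      nlinarith
  -- Step: m < B₀ ↔ target inequality (via logarithms)
  have hstep4 : m < B₀ ↔
      A₀ ^ a * B₀ ^ (2 - k) < a ^ a * b ^ b / (k - 2) ^ (k - 2) := by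
    have hL1 : 0 < A₀ ^ a * B₀ ^ (2 - k) := by positivity
    have hR1 : 0 < a ^ a * b ^ b / (k - 2) ^ (k - 2) := by positivity
    rw [← Real.log_lt_log_iff hm_pos hB, ← Real.log_lt_log_iff hL1 hR1]
    have hlogm : Real.log m = a / (k - 2) * (Real.log A₀ + Real.log b - Real.log a)
        + (Real.log (k - 2) - Real.log b) := by
      rw [hm, hta, Real.log_mul (by positivity) (by positivity),
        Real.log_rpow hc, hc', Real.log_div (by positivity) (ne_of_gt ha),
        Real.log_mul (ne_of_gt hA) (ne_of_gt hb),
        Real.log_div (ne_of_gt hs) (ne_of_gt hb)]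
    have hlogL : Real.log (A₀ ^ a * B₀ ^ (2 - k)) =
        a * Real.log A₀ + (2 - k) * Real.log B₀ := by
      rw [Real.log_mul (by positivity) (by positivity),
        Real.log_rpow hA, Real.log_rpow hB]
    have hlogR : Real.log (a ^ a * b ^ b / (k - 2) ^ (k - 2)) =
        a * Real.log a + b * Real.log b - (k - 2) * Real.log (k - 2) := by
      rw [Real.log_div (by positivity) (by positivity),
        Real.log_mul (by positivity) (by positivity),
        Real.log_rpow ha, Real.log_rpow hb, Real.log_rpow hs]
    rw [hlogm, hlogL, hlogR]
    have hexp : (k - 2) * (a / (k - 2) * (Real.log A₀ + Real.log b - Real.log a)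
        + (Real.log (k - 2) - Real.log b)) =
        a * (Real.log A₀ + Real.log b - Real.log a)
        + (k - 2) * (Real.log (k - 2) - Real.log b) := by
      field_simp
    constructor
    · intro h
      have h2 := mul_lt_mul_of_pos_left h hs
      rw [hexp] at h2
      simp only [ha', hb'] at h2 ⊢
      linarith
    · intro h
      have h2 : a * (Real.log A₀ + Real.log b - Real.log a)
          + (k - 2) * (Real.log (k - 2) - Real.log b) < (k - 2) * Real.log B₀ := by
        simp only [ha', hb'] at h ⊢
        linarith
      rw [← hexp] at h2
      exact lt_of_mul_lt_mul_left h2 hs.le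
  rw [hstep2, hstep3, hstep1, hstep4]
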